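/- Let F be a field of characteristic p and q = p^h. In the polynomial ring F[X, Y, Z], the Dickson determinant D_2 = det [[X, X^{q^2}, X^{q^4}], [Y, Y^{q^2}, Y^{q^4}], [Z, Z^{q^2}, Z^{q^4}]] divides the dual Dickson determinant E_1 = det [[X, X^{q^4}, X^{q^6}], [Y, Y^{q^4}, Y^{q^6}], [Z, Z^{q^4}, Z^{q^6}]]; moreover the quotient polynomial E_1/D_2 has total degree q^6 − q^2. -/

import Mathlib

open MvPolynomial

/-- Two triples of `Finsupp.single`s on `Fin 3` differ if the first components differ. -/
lemma fin3_single_ne_fst (a b c a' b' c' : ℕ) (h : a ≠ a') :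
    (Finsupp.single (0:Fin 3) a + Finsupp.single 1 b + Finsupp.single 2 c) ≠
    (Finsupp.single 0 a' + Finsupp.single 1 b' + Finsupp.single 2 c') := by
  intro hcon
  apply h
  simpa [Finsupp.single_apply] using DFunLike.congr_fun hcon 0

/-- Two triples of `Finsupp.single`s on `Fin 3` differ if the second components differ. -/
lemma fin3_single_ne_snd (a b c a' b' c' : ℕ) (h : b ≠ b') :
    (Finsupp.single (0:Fin 3) a + Finsupp.single 1 b + Finsupp.single 2 c) ≠
    (Finsupp.single 0 a' + Finsupp.single 1 b' + Finsupp.single 2 c') := by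
  intro hcon
  apply h
  simpa [Finsupp.single_apply] using DFunLike.congr_fun hcon 1

set_option maxHeartbeats 1600000 in
/-- D₂ divides E₁ in F[X,Y,Z], and the quotient (the dual Borges/DGZ polynomial)
has total degree q⁶ − q². -/
theorem dual_borges_polynomial (p h q : ℕ) (hp : p.Prime) (hh : 1 ≤ h) (hq : q = p ^ h)
    (F : Type*) [Field F] [CharP F p]
    (X Y Z E1 D2 : MvPolynomial (Fin 3) F)
    (hX : X = MvPolynomial.X 0) (hY : Y = MvPolynomial.X 1) (hZ : Z = MvPolynomial.X 2)
    (hE1 : E1 = Matrix.det !![X, X ^ q ^ 4, X ^ q ^ 6;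
                              Y, Y ^ q ^ 4, Y ^ q ^ 6;
                              Z, Z ^ q ^ 4, Z ^ q ^ 6])
    (hD2 : D2 = Matrix.det !![X, X ^ q ^ 2, X ^ q ^ 4;
                              Y, Y ^ q ^ 2, Y ^ q ^ 4;
                              Z, Z ^ q ^ 2, Z ^ q ^ 4]) :
    D2 ∣ E1 ∧ ∃ Q : MvPolynomial (Fin 3) F,
      E1 = D2 * Q ∧ Q.totalDegree = q ^ 6 - q ^ 2 := by
  haveI : Fact p.Prime := ⟨hp⟩
  subst hX hY hZ
  -- basic numerics
  have hq2 : 2 ≤ q := by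
    rw [hq]
    calc 2 ≤ p := hp.two_le
    _ ≤ p ^ h := Nat.le_self_pow (by omega) p
  obtain ⟨R, hR⟩ : ∃ R, q ^ 2 = R + 1 :=
    ⟨q ^ 2 - 1, (Nat.succ_pred_eq_of_pos (by positivity)).symm⟩
  have hR3 : 3 ≤ R := by nlinarith
  have e4 : q ^ 4 = (R+1)*(R+1) := by
    have : q ^ 4 = q ^ 2 * q ^ 2 := by ring
    rw [this, hR]
  have e6 : q ^ 6 = (R+1)*(R+1)*((R+1)) := by
    have : q ^ 6 = q ^ 2 * q ^ 2 * q ^ 2 := by ring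
    rw [this, hR]
  rw [hR, e4] at hD2
  rw [e4, e6] at hE1
  -- Frobenius
  have hQp : R + 1 = p ^ (h * 2) := by rw [← hR, hq, ← pow_mul]
  have hfsub : ∀ a b : MvPolynomial (Fin 3) F,
      (a - b) ^ (R+1) = a ^ (R+1) - b ^ (R+1) := by
    intro a b; rw [hQp]; exact sub_pow_char_pow a b (h*2)
  have hfadd : ∀ a b : MvPolynomial (Fin 3) F,
      (a + b) ^ (R+1) = a ^ (R+1) + b ^ (R+1) := by
    intro a b; rw [hQp]; exact add_pow_char_pow a b p (h*2)
  -- opaque names for the variables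
  obtain ⟨X0, hX0⟩ : ∃ v : MvPolynomial (Fin 3) F, v = MvPolynomial.X 0 := ⟨_, rfl⟩
  obtain ⟨X1, hX1⟩ : ∃ v : MvPolynomial (Fin 3) F, v = MvPolynomial.X 1 := ⟨_, rfl⟩
  obtain ⟨X2, hX2⟩ : ∃ v : MvPolynomial (Fin 3) F, v = MvPolynomial.X 2 := ⟨_, rfl⟩
  rw [← hX0, ← hX1, ← hX2] at hE1 hD2
  -- building blocks (opaque)
  obtain ⟨f1Y, hf1Y⟩ : ∃ v : MvPolynomial (Fin 3) F,
    v = X1 ^ (R+1) - X0 ^ R * X1 := ⟨_, rfl⟩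
  obtain ⟨c21, hc21⟩ : ∃ v : MvPolynomial (Fin 3) F,
    v = X0 ^ (R*(R+1)) + f1Y ^ R := ⟨_, rfl⟩
  obtain ⟨c20, hc20⟩ : ∃ v : MvPolynomial (Fin 3) F,
    v = X0 ^ R * f1Y ^ R := ⟨_, rfl⟩
  obtain ⟨f2Z, hf2Z⟩ : ∃ v : MvPolynomial (Fin 3) F,
    v = X2 ^ ((R+1)*(R+1)) - c21 * X2 ^ (R+1) + c20 * X2 := ⟨_, rfl⟩
  obtain ⟨m0, hm0⟩ : ∃ v : MvPolynomial (Fin 3) F,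
    v = X0 * X1 ^ (R+1) - X1 * X0 ^ (R+1) := ⟨_, rfl⟩
  obtain ⟨m1, hm1⟩ : ∃ v : MvPolynomial (Fin 3) F,
    v = X0 * X1 ^ ((R+1)*(R+1)) - X1 * X0 ^ ((R+1)*(R+1)) := ⟨_, rfl⟩
  obtain ⟨m2, hm2⟩ : ∃ v : MvPolynomial (Fin 3) F,
    v = X0 * X1 ^ ((R+1)*(R+1)*(R+1)) - X1 * X0 ^ ((R+1)*(R+1)*(R+1)) := ⟨_, rfl⟩
  obtain ⟨G, hG⟩ : ∃ v : MvPolynomial (Fin 3) F,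
    v = c20 ^ (R+1) + f2Z ^ R * c21 := ⟨_, rfl⟩
  -- identities
  have hm0' : m0 = X0 * f1Y := by rw [hm0, hf1Y]; ring
  have F1 : f1Y ^ (R+1) = X1 ^ ((R+1)*(R+1)) - X0 ^ (R*(R+1)) * X1 ^ (R+1) := by
    rw [hf1Y, hfsub, mul_pow, ← pow_mul, ← pow_mul]
  have F2 : m1 = m0 * c21 := by
    have step : m0 * c21 = X0 ^ (R*(R+1)) * (X0 * f1Y) + X0 * f1Y ^ (R+1) := by
      rw [hm0', hc21]; ring
    rw [step, F1, hf1Y, hm1]; ring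
  have F3 : X0 ^ ((R+1)*(R+1)) = c21 * X0 ^ (R+1) - c20 * X0 := by
    rw [hc21, hc20]; ring
  have F4 : X1 ^ ((R+1)*(R+1)) = c21 * X1 ^ (R+1) - c20 * X1 := by
    have step : c21 * X1 ^ (R+1) - c20 * X1
        = X0 ^ (R*(R+1)) * X1 ^ (R+1) + f1Y ^ (R+1) := by
      rw [hc21, hc20, hf1Y]; ring
    rw [step, F1]; ring
  have F5X : X0 ^ ((R+1)*(R+1)*(R+1))
      = c21 ^ (R+1) * X0 ^ ((R+1)*(R+1)) - c20 ^ (R+1) * X0 ^ (R+1) := by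
    calc X0 ^ ((R+1)*(R+1)*(R+1)) = (X0 ^ ((R+1)*(R+1))) ^ (R+1) := by
          rw [← pow_mul]
    _ = (c21 * X0 ^ (R+1) - c20 * X0) ^ (R+1) := by rw [F3]
    _ = c21 ^ (R+1) * X0 ^ ((R+1)*(R+1)) - c20 ^ (R+1) * X0 ^ (R+1) := by
        rw [hfsub, mul_pow, mul_pow, ← pow_mul]
  have F5Y : X1 ^ ((R+1)*(R+1)*(R+1))
      = c21 ^ (R+1) * X1 ^ ((R+1)*(R+1)) - c20 ^ (R+1) * X1 ^ (R+1) := by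
    calc X1 ^ ((R+1)*(R+1)*(R+1)) = (X1 ^ ((R+1)*(R+1))) ^ (R+1) := by
          rw [← pow_mul]
    _ = (c21 * X1 ^ (R+1) - c20 * X1) ^ (R+1) := by rw [F4]
    _ = c21 ^ (R+1) * X1 ^ ((R+1)*(R+1)) - c20 ^ (R+1) * X1 ^ (R+1) := by
        rw [hfsub, mul_pow, mul_pow, ← pow_mul]
  have F6 : f2Z ^ (R+1) = X2 ^ ((R+1)*(R+1)*(R+1))
      - c21 ^ (R+1) * X2 ^ ((R+1)*(R+1)) + c20 ^ (R+1) * X2 ^ (R+1) := by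
    rw [hf2Z, hfadd, hfsub, mul_pow, mul_pow, ← pow_mul, ← pow_mul]
  have F7 : m0 ^ (R+1) = m0 * c20 := by
    calc m0 ^ (R+1) = (X0 * f1Y) ^ (R+1) := by rw [hm0']
    _ = (X0 * X0 ^ R) * (f1Y * f1Y ^ R) := by rw [mul_pow]; ring
    _ = m0 * c20 := by rw [hm0', hc20]; ring
  have F8 : m2 = c21 ^ (R+1) * m1 - c20 ^ (R+1) * m0 := by
    rw [hm2, F5X, F5Y, hm1, hm0]; ring
  have Fn1 : X0 ^ (R+1) * X1 ^ ((R+1)*(R+1)) - X1 ^ (R+1) * X0 ^ ((R+1)*(R+1))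
      = m0 * c20 := by
    rw [F3, F4, hm0]; ring
  have Fn2 : X0 ^ ((R+1)*(R+1)) * X1 ^ ((R+1)*(R+1)*(R+1))
      - X1 ^ ((R+1)*(R+1)) * X0 ^ ((R+1)*(R+1)*(R+1))
      = c20 ^ (R+1) * (m0 * c20) := by
    calc X0 ^ ((R+1)*(R+1)) * X1 ^ ((R+1)*(R+1)*(R+1))
        - X1 ^ ((R+1)*(R+1)) * X0 ^ ((R+1)*(R+1)*(R+1))
        = c20 ^ (R+1) * (X0 ^ (R+1) * X1 ^ ((R+1)*(R+1))
            - X1 ^ (R+1) * X0 ^ ((R+1)*(R+1))) := by rw [F5X, F5Y]; ring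
    _ = c20 ^ (R+1) * (m0 * c20) := by rw [Fn1]
  -- explicit determinant expansions
  have hE1c : E1 = X0 ^ 1 * X1 ^ ((R+1)*(R+1)) * X2 ^ ((R+1)*(R+1)*(R+1))
      - X0 ^ 1 * X1 ^ ((R+1)*(R+1)*(R+1)) * X2 ^ ((R+1)*(R+1))
      - X0 ^ ((R+1)*(R+1)) * X1 ^ 1 * X2 ^ ((R+1)*(R+1)*(R+1))
      + X0 ^ ((R+1)*(R+1)) * X1 ^ ((R+1)*(R+1)*(R+1)) * X2 ^ 1
      + X0 ^ ((R+1)*(R+1)*(R+1)) * X1 ^ 1 * X2 ^ ((R+1)*(R+1))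
      - X0 ^ ((R+1)*(R+1)*(R+1)) * X1 ^ ((R+1)*(R+1)) * X2 ^ 1 := by
    rw [hE1, Matrix.det_fin_three]
    norm_num [Matrix.cons_val_zero, Matrix.cons_val_one, Matrix.head_cons,
      Matrix.cons_val_two, Matrix.tail_cons]
  have hD2c : D2 = X2 * (X0 ^ (R+1) * X1 ^ ((R+1)*(R+1))
        - X1 ^ (R+1) * X0 ^ ((R+1)*(R+1)))
      - X2 ^ (R+1) * (X0 * X1 ^ ((R+1)*(R+1)) - X1 * X0 ^ ((R+1)*(R+1)))
      + X2 ^ ((R+1)*(R+1)) * (X0 * X1 ^ (R+1) - X1 * X0 ^ (R+1)) := by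
    rw [hD2, Matrix.det_fin_three]
    norm_num [Matrix.cons_val_zero, Matrix.cons_val_one, Matrix.head_cons,
      Matrix.cons_val_two, Matrix.tail_cons]
    ring
  -- D2 = m0 * f2Z
  have F11 : D2 = m0 * f2Z := by
    rw [hD2c, Fn1, ← hm1, ← hm0, F2, hf2Z]
    ring
  -- E1 in terms of the blocks
  have F10 : E1 = X2 * (c20 ^ (R+1) * (m0 * c20))
      - X2 ^ ((R+1)*(R+1)) * m2 + X2 ^ ((R+1)*(R+1)*(R+1)) * m1 := by
    calc E1 = X2 * (X0 ^ ((R+1)*(R+1)) * X1 ^ ((R+1)*(R+1)*(R+1))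
          - X1 ^ ((R+1)*(R+1)) * X0 ^ ((R+1)*(R+1)*(R+1)))
        - X2 ^ ((R+1)*(R+1)) * (X0 * X1 ^ ((R+1)*(R+1)*(R+1))
          - X1 * X0 ^ ((R+1)*(R+1)*(R+1)))
        + X2 ^ ((R+1)*(R+1)*(R+1)) * (X0 * X1 ^ ((R+1)*(R+1))
          - X1 * X0 ^ ((R+1)*(R+1))) := by rw [hE1c]; ring
    _ = X2 * (c20 ^ (R+1) * (m0 * c20)) - X2 ^ ((R+1)*(R+1)) * m2
        + X2 ^ ((R+1)*(R+1)*(R+1)) * m1 := by rw [Fn2, ← hm2, ← hm1]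
  have F12 : E1 = m0 * (f2Z * c20 ^ (R+1) + f2Z ^ (R+1) * c21) := by
    rw [F10, F8, F2, F6, hf2Z]; ring
  have F13 : E1 = D2 * G := by
    rw [F12, F11, hG]; ring
  -- total degree computations : upper bounds
  have hdX0 : ∀ n : ℕ, (X0 ^ n).totalDegree = n := by
    intro n; rw [hX0]; exact totalDegree_X_pow _ n
  have hdX1 : ∀ n : ℕ, (X1 ^ n).totalDegree = n := by
    intro n; rw [hX1]; exact totalDegree_X_pow _ n
  have hdX2 : ∀ n : ℕ, (X2 ^ n).totalDegree = n := by
    intro n; rw [hX2]; exact totalDegree_X_pow _ n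
  have hdX0' : X0.totalDegree = 1 := by rw [hX0]; exact totalDegree_X _
  have hdX1' : X1.totalDegree = 1 := by rw [hX1]; exact totalDegree_X _
  have hdX2' : X2.totalDegree = 1 := by rw [hX2]; exact totalDegree_X _
  have hdf1Y : f1Y.totalDegree ≤ R + 1 := by
    rw [hf1Y]
    refine le_trans (totalDegree_sub _ _) (max_le ?_ ?_)
    · rw [hdX1]
    · refine le_trans (totalDegree_mul _ _) ?_
      rw [hdX0, hdX1']
  have hdc21 : c21.totalDegree ≤ R * (R+1) := by
    rw [hc21]
    refine le_trans (totalDegree_add _ _) (max_le ?_ ?_)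
    · rw [hdX0]
    · refine le_trans (totalDegree_pow _ _) ?_
      exact Nat.mul_le_mul_left R hdf1Y
  have hdc20 : c20.totalDegree ≤ R + R * (R+1) := by
    rw [hc20]
    refine le_trans (totalDegree_mul _ _) ?_
    have h2 : (f1Y ^ R).totalDegree ≤ R * (R+1) :=
      le_trans (totalDegree_pow _ _) (Nat.mul_le_mul_left R hdf1Y)
    rw [hdX0]
    linarith
  have hdf2Z : f2Z.totalDegree ≤ (R+1) * (R+1) := by
    rw [hf2Z]
    refine le_trans (totalDegree_add _ _) (max_le ?_ ?_)
    · refine le_trans (totalDegree_sub _ _) (max_le ?_ ?_)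
      · rw [hdX2]
      · refine le_trans (totalDegree_mul _ _) ?_
        rw [hdX2]
        calc c21.totalDegree + (R+1) ≤ R*(R+1) + (R+1) := by linarith
        _ = (R+1)*(R+1) := by ring
    · refine le_trans (totalDegree_mul _ _) ?_
      rw [hdX2']
      calc c20.totalDegree + 1 ≤ R + R*(R+1) + 1 := by linarith
      _ = (R+1)*(R+1) := by ring
  have hdm0 : m0.totalDegree ≤ R + 2 := by
    rw [hm0]
    refine le_trans (totalDegree_sub _ _) (max_le ?_ ?_)
    · refine le_trans (totalDegree_mul _ _) ?_
      rw [hdX0', hdX1]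
      omega
    · refine le_trans (totalDegree_mul _ _) ?_
      rw [hdX1', hdX0]
      omega
  have hdD2 : D2.totalDegree ≤ 1 + (R+1) + (R+1)*(R+1) := by
    rw [F11]
    refine le_trans (totalDegree_mul _ _) ?_
    linarith [hdm0, hdf2Z]
  have hdG : G.totalDegree ≤ R * ((R+1) * (R+2)) := by
    rw [hG]
    refine le_trans (totalDegree_add _ _) (max_le ?_ ?_)
    · refine le_trans (totalDegree_pow _ _) ?_
      calc (R+1) * c20.totalDegree ≤ (R+1) * (R + R * (R+1)) :=
            Nat.mul_le_mul_left _ hdc20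
      _ = R * ((R+1) * (R+2)) := by ring
    · refine le_trans (totalDegree_mul _ _) ?_
      have h1 : (f2Z ^ R).totalDegree ≤ R * ((R+1) * (R+1)) :=
        le_trans (totalDegree_pow _ _) (Nat.mul_le_mul_left R hdf2Z)
      calc (f2Z ^ R).totalDegree + c21.totalDegree
          ≤ R * ((R+1) * (R+1)) + R * (R+1) := Nat.add_le_add h1 hdc21
      _ = R * ((R+1) * (R+2)) := by ring
  -- lower bound for E1's total degree via an explicit coefficient
  obtain ⟨m, hm⟩ : ∃ v : Fin 3 →₀ ℕ, v = Finsupp.single 0 1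
      + Finsupp.single 1 ((R+1)*(R+1))
      + Finsupp.single 2 ((R+1)*(R+1)*(R+1)) := ⟨_, rfl⟩
  have hb1 : (1 : ℕ) ≠ (R+1)*(R+1) := by nlinarith
  have hb2 : (1 : ℕ) ≠ (R+1)*(R+1)*(R+1) := by nlinarith
  have hb3 : (R+1)*(R+1) ≠ (R+1)*(R+1)*(R+1) := by nlinarith
  have hco : MvPolynomial.coeff m E1 = 1 := by
    rw [hE1c, hm, hX0, hX1, hX2]
    simp only [MvPolynomial.coeff_sub, MvPolynomial.coeff_add,
      MvPolynomial.X_pow_eq_monomial, MvPolynomial.monomial_mul,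
      MvPolynomial.coeff_monomial, mul_one, one_mul]
    rw [if_neg (fin3_single_ne_snd _ _ _ _ _ _ (Ne.symm hb3)),
      if_neg (fin3_single_ne_snd _ _ _ _ _ _ hb1),
      if_neg (fin3_single_ne_snd _ _ _ _ _ _ (Ne.symm hb3)),
      if_neg (fin3_single_ne_snd _ _ _ _ _ _ hb1),
      if_neg (fin3_single_ne_fst _ _ _ _ _ _ (Ne.symm hb2))]
    norm_num
  have hmsum : (m.sum fun _ e => e) = 1 + (R+1)*(R+1) + (R+1)*(R+1)*(R+1) := by
    rw [hm, Finsupp.sum_add_index' (fun _ => rfl) (fun _ _ _ => rfl),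
      Finsupp.sum_add_index' (fun _ => rfl) (fun _ _ _ => rfl),
      Finsupp.sum_single_index rfl, Finsupp.sum_single_index rfl,
      Finsupp.sum_single_index rfl]
  have hlow : 1 + (R+1)*(R+1) + (R+1)*(R+1)*(R+1) ≤ E1.totalDegree := by
    rw [← hmsum]
    exact MvPolynomial.le_totalDegree (MvPolynomial.mem_support_iff.mpr (by
      rw [hco]; exact one_ne_zero))
  have hEdeg : 1 + (R+1)*(R+1) + (R+1)*(R+1)*(R+1)
      ≤ D2.totalDegree + G.totalDegree := by
    calc 1 + (R+1)*(R+1) + (R+1)*(R+1)*(R+1) ≤ E1.totalDegree := hlow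
    _ = (D2 * G).totalDegree := by rw [F13]
    _ ≤ D2.totalDegree + G.totalDegree := totalDegree_mul _ _
  have hCT : (R+1)*(R+1)*(R+1) = R * ((R+1) * (R+2)) + (R+1) := by ring
  have hgeG : R * ((R+1) * (R+2)) ≤ G.totalDegree := by linarith
  have hdegG : G.totalDegree = R * ((R+1) * (R+2)) := le_antisymm hdG hgeG
  have htarget : q ^ 6 - q ^ 2 = R * ((R+1) * (R+2)) := by
    rw [e6, hR, hCT, Nat.add_sub_cancel]
  exact ⟨⟨G, F13⟩, G, F13, by rw [hdegG, htarget]⟩
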